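/- Let γ(t) = (at+b)/(ct+d) with ad−bc ≠ 0 over a valued field K, p ∈ K, and δ a nonzero radius with |cp+d| > δ·|c|. Then γ maps the closed ball B(p,δ) bijectively onto the closed ball B(γ(p), |γ'(p)|·δ). -/

import Mathlib

theorem stmt_5 {K Γ₀ : Type*} [Field K] [LinearOrderedCommGroupWithZero Γ₀]
    (v : Valuation K Γ₀) (a b c d p : K) (δ : Γ₀) (hδ : δ ≠ 0)
    (hdet : a * d - b * c ≠ 0)
    (hpole : δ * v c < v (c * p + d)) :
    Set.BijOn (fun t : K => (a * t + b) / (c * t + d))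
      {y : K | v (y - p) ≤ δ}
      {y : K | v (y - (a * p + b) / (c * p + d)) ≤ v ((b * c - a * d) / (c * p + d) ^ 2) * δ} := by
  set W := v (c * p + d) with hWdef
  set V := v (a * d - b * c) with hVdef
  have hW : W ≠ 0 := (zero_le'.trans_lt hpole).ne'
  have hcpd : c * p + d ≠ 0 := v.ne_zero_iff.mp hW
  have hV : V ≠ 0 := v.ne_zero_iff.mpr hdet
  have hr : v ((b * c - a * d) / (c * p + d) ^ 2) = V / W ^ 2 := by
    rw [map_div₀, map_pow, show b * c - a * d = -(a * d - b * c) by ring, v.map_neg]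
  have hrW : V / W ^ 2 * W = V / W := by
    rw [pow_two, ← div_div, div_mul_cancel₀ _ hW]
  have hWW : W * W ≠ 0 := mul_ne_zero hW hW
  -- denominators are constant on the ball
  have hden : ∀ t : K, v (t - p) ≤ δ → v (c * t + d) = W := by
    intro t ht
    have h1 : v (c * (t - p)) < W := by
      rw [v.map_mul]
      calc v c * v (t - p) ≤ v c * δ := mul_le_mul_right ht _
        _ = δ * v c := mul_comm _ _
        _ < W := hpole
    have h2 := v.map_add_eq_of_lt_right h1
    rwa [show c * (t - p) + (c * p + d) = c * t + d by ring] at h2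
  constructor
  · -- MapsTo
    intro t ht
    have ht' : v (t - p) ≤ δ := ht
    have hdt : v (c * t + d) = W := hden t ht'
    have hct : c * t + d ≠ 0 := v.ne_zero_iff.mp (hdt ▸ hW)
    have hform : (a * t + b) / (c * t + d) - (a * p + b) / (c * p + d)
        = (a * d - b * c) * (t - p) / ((c * t + d) * (c * p + d)) := by
      rw [div_sub_div _ _ hct hcpd]
      ring
    show v ((a * t + b) / (c * t + d) - (a * p + b) / (c * p + d))
        ≤ v ((b * c - a * d) / (c * p + d) ^ 2) * δ
    rw [hr, hform, map_div₀, v.map_mul, v.map_mul, hdt]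
    calc V * v (t - p) / (W * W) ≤ V * δ / (W * W) :=
          (div_le_div_iff_of_pos_right (zero_lt_iff.mpr hWW)).mpr (mul_le_mul_right ht' V)
      _ = V / W ^ 2 * δ := by rw [pow_two, div_mul_eq_mul_div]
  constructor
  · -- InjOn
    intro t ht s hs heq
    have hct : c * t + d ≠ 0 := v.ne_zero_iff.mp ((hden t ht) ▸ hW)
    have hcs : c * s + d ≠ 0 := v.ne_zero_iff.mp ((hden s hs) ▸ hW)
    simp only at heq
    rw [div_eq_div_iff hct hcs] at heq
    have h0 : (a * d - b * c) * (t - s) = 0 := by linear_combination heq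
    rcases mul_eq_zero.mp h0 with h | h
    · exact absurd h hdet
    · exact sub_eq_zero.mp h
  · -- SurjOn
    intro y hy
    have hy' : v (y - (a * p + b) / (c * p + d)) ≤ V / W ^ 2 * δ := by
      rw [← hr]; exact hy
    have hkey : a - c * y
        = (a * d - b * c) / (c * p + d) + (-c) * (y - (a * p + b) / (c * p + d)) := by
      field_simp
      ring
    have h2 : v ((-c) * (y - (a * p + b) / (c * p + d))) < v ((a * d - b * c) / (c * p + d)) := by
      rw [v.map_mul, v.map_neg, map_div₀, ← hVdef, ← hWdef]
      calc v c * v (y - (a * p + b) / (c * p + d)) ≤ v c * (V / W ^ 2 * δ) :=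
            mul_le_mul_right hy' _
        _ = V / W ^ 2 * (δ * v c) := by rw [mul_comm (v c), mul_assoc]
        _ < V / W ^ 2 * W := mul_lt_mul_of_pos_left hpole (zero_lt_iff.mpr (div_ne_zero hV (pow_ne_zero 2 hW)))
        _ = V / W := hrW
    have h3 : v (a - c * y) = V / W := by
      rw [hkey, v.map_add_eq_of_lt_left h2, map_div₀, ← hVdef, ← hWdef]
    have hVW : V / W ≠ 0 := div_ne_zero hV hW
    have hay : a - c * y ≠ 0 := v.ne_zero_iff.mp (h3 ▸ hVW)
    refine ⟨(d * y - b) / (a - c * y), ?_, ?_⟩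
    · -- in the ball
      show v ((d * y - b) / (a - c * y) - p) ≤ δ
      have htp : (d * y - b) / (a - c * y) - p
          = (c * p + d) * (y - (a * p + b) / (c * p + d)) / (a - c * y) := by
        rw [mul_sub, mul_div_cancel₀ _ hcpd, div_sub' hay]
        ring
      rw [htp, map_div₀, v.map_mul, h3, ← hWdef]
      calc W * v (y - (a * p + b) / (c * p + d)) / (V / W)
          ≤ W * (V / W ^ 2 * δ) / (V / W) := (div_le_div_iff_of_pos_right (zero_lt_iff.mpr hVW)).mpr (mul_le_mul_right hy' W)
        _ = δ := by
            field_simp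
    · -- maps to y
      have hmem : v ((d * y - b) / (a - c * y) - p) ≤ δ := by
        have htp : (d * y - b) / (a - c * y) - p
            = (c * p + d) * (y - (a * p + b) / (c * p + d)) / (a - c * y) := by
          rw [mul_sub, mul_div_cancel₀ _ hcpd, div_sub' hay]
          ring
        rw [htp, map_div₀, v.map_mul, h3, ← hWdef]
        calc W * v (y - (a * p + b) / (c * p + d)) / (V / W)
            ≤ W * (V / W ^ 2 * δ) / (V / W) := (div_le_div_iff_of_pos_right (zero_lt_iff.mpr hVW)).mpr (mul_le_mul_right hy' W)
          _ = δ := by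
              field_simp
      have hctd : c * ((d * y - b) / (a - c * y)) + d = (a * d - b * c) / (a - c * y) := by
        field_simp
        ring
      have hct : c * ((d * y - b) / (a - c * y)) + d ≠ 0 := by
        rw [hctd]; exact div_ne_zero hdet hay
      show (a * ((d * y - b) / (a - c * y)) + b) / (c * ((d * y - b) / (a - c * y)) + d) = y
      rw [div_eq_iff hct]
      rw [hctd]
      simp only [mul_div_assoc']
      rw [div_add' _ _ _ hay, div_left_inj' hay]
      ring
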